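/- For every n ≥ 2 there exists a set of 2^(n-2) points in general position in the plane containing no n points in convex position. -/
import Mathlib

open Finset

/-- No three of the points of `S` are collinear. -/
def NoThreeCollinear (S : Set (ℝ × ℝ)) : Prop :=
  ∀ p ∈ S, ∀ q ∈ S, ∀ r ∈ S, p ≠ q → p ≠ r → q ≠ r →
    AffineIndependent ℝ ![p, q, r]

/-- A set of points is in convex position (convexly independent). -/
def ConvexIndep (S : Set (ℝ × ℝ)) : Prop :=
  ∀ p ∈ S, p ∉ convexHull ℝ (S \ {p})

namespace ESLB


noncomputable def slp (p q : ℝ × ℝ) : ℝ := (q.2 - p.2) / (q.1 - p.1)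

lemma slp_cross {p q : ℝ × ℝ} (h : p.1 < q.1) {c : ℝ} :
    slp p q < c ↔ q.2 - p.2 < c * (q.1 - p.1) := by
  rw [slp, div_lt_iff₀ (by linarith)]

lemma cross_slp {p q : ℝ × ℝ} (h : p.1 < q.1) {c : ℝ} :
    c < slp p q ↔ c * (q.1 - p.1) < q.2 - p.2 := by
  rw [slp, lt_div_iff₀ (by linarith)]

lemma slp_lt_slp_iff {p q q' r : ℝ × ℝ} (h1 : p.1 < q.1) (h2 : q'.1 < r.1) :
    slp p q < slp q' r ↔ (q.2 - p.2) * (r.1 - q'.1) < (r.2 - q'.2) * (q.1 - p.1) := by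
  rw [slp, slp, div_lt_div_iff₀ (by linarith) (by linarith)]

/-- q below chord pr (cup direction): from slp p q < slp q r. -/
lemma slp_lt_left {p q r : ℝ × ℝ} (h1 : p.1 < q.1) (h2 : q.1 < r.1)
    (h : slp p q < slp q r) : slp p q < slp p r := by
  rw [slp_lt_slp_iff h1 h2] at h
  rw [slp_lt_slp_iff h1 (h1.trans h2)]
  nlinarith

lemma slp_lt_right {p q r : ℝ × ℝ} (h1 : p.1 < q.1) (h2 : q.1 < r.1)
    (h : slp p q < slp q r) : slp p r < slp q r := by
  rw [slp_lt_slp_iff h1 h2] at h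
  rw [slp_lt_slp_iff (h1.trans h2) h2]
  nlinarith

lemma slp_gt_left {p q r : ℝ × ℝ} (h1 : p.1 < q.1) (h2 : q.1 < r.1)
    (h : slp q r < slp p q) : slp p r < slp p q := by
  rw [slp_lt_slp_iff h2 h1] at h
  rw [slp_lt_slp_iff (h1.trans h2) h1]
  nlinarith

lemma slp_gt_right {p q r : ℝ × ℝ} (h1 : p.1 < q.1) (h2 : q.1 < r.1)
    (h : slp q r < slp p q) : slp q r < slp p r := by
  rw [slp_lt_slp_iff h2 h1] at h
  rw [slp_lt_slp_iff h2 (h1.trans h2)]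
  nlinarith

lemma slp_eq_iff {p q q' r : ℝ × ℝ} (h1 : p.1 < q.1) (h2 : q'.1 < r.1) :
    slp p q = slp q' r ↔ (q.2 - p.2) * (r.1 - q'.1) = (r.2 - q'.2) * (q.1 - p.1) := by
  rw [slp, slp, div_eq_div_iff (by linarith) (by linarith)]

lemma slp_eq_trans {p q r : ℝ × ℝ} (h1 : p.1 < q.1) (h2 : q.1 < r.1)
    (h : slp p q = slp q r) : slp p q = slp p r := by
  rw [slp_eq_iff h1 h2] at h
  rw [slp_eq_iff h1 (h1.trans h2)]
  nlinarith [h]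

/-- the point on segment p r with abscissa x. -/
lemma seg_point {p r : ℝ × ℝ} (h : p.1 < r.1) {x : ℝ} (hx1 : p.1 ≤ x) (hx2 : x ≤ r.1) :
    (x, p.2 + slp p r * (x - p.1)) ∈ segment ℝ p r := by
  have hd : r.1 - p.1 > 0 := by linarith
  have ht0 : (0:ℝ) ≤ (x - p.1) / (r.1 - p.1) := by
    apply div_nonneg <;> linarith
  have ht1 : (x - p.1) / (r.1 - p.1) ≤ 1 := by
    rw [div_le_one hd]; linarith
  refine ⟨1 - (x - p.1) / (r.1 - p.1), (x - p.1) / (r.1 - p.1), by linarith, ht0, by ring, ?_⟩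
  apply Prod.ext
  · simp [Prod.fst]
    field_simp
    ring
  · simp [Prod.snd, slp]
    field_simp
    ring

/-- vertical segment membership in a convex hull -/
lemma vert_mem {s : Set (ℝ × ℝ)} {u v q : ℝ × ℝ} (hu : u ∈ convexHull ℝ s)
    (hv : v ∈ convexHull ℝ s) (hx1 : u.1 = q.1) (hx2 : v.1 = q.1)
    (hy1 : v.2 ≤ q.2) (hy2 : q.2 ≤ u.2) : q ∈ convexHull ℝ s := by
  have hseg : segment ℝ v u ⊆ convexHull ℝ s :=
    (convex_convexHull ℝ s).segment_subset hv hu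
  apply hseg
  rcases eq_or_lt_of_le (hy1.trans hy2) with he | hlt
  · have : q = v := by
      apply Prod.ext
      · exact hx2.symm
      · exact le_antisymm (by linarith) hy1
    rw [this]; exact left_mem_segment ℝ v u
  · set t := (q.2 - v.2) / (u.2 - v.2) with ht
    have h0 : 0 ≤ t := by apply div_nonneg <;> linarith
    have h1 : t ≤ 1 := by rw [div_le_one (by linarith)]; linarith
    refine ⟨1 - t, t, by linarith, h0, by ring, ?_⟩
    apply Prod.ext
    · simp only [Prod.fst_add, Prod.smul_fst, smul_eq_mul]
      rw [hx1, hx2]; ring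
    · simp only [Prod.snd_add, Prod.smul_snd, smul_eq_mul]
      have hne : u.2 - v.2 ≠ 0 := sub_ne_zero.mpr (ne_of_gt hlt)
      rw [ht]
      field_simp
      ring

lemma seg_mem_hull {p r : ℝ × ℝ} {s : Set (ℝ × ℝ)} (hp : p ∈ s) (hr : r ∈ s)
    (h : p.1 < r.1) {x : ℝ} (hx1 : p.1 ≤ x) (hx2 : x ≤ r.1) :
    (x, p.2 + slp p r * (x - p.1)) ∈ convexHull ℝ s := by
  have := seg_point h hx1 hx2
  have hsub : segment ℝ p r ⊆ convexHull ℝ s :=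
    (convex_convexHull ℝ s).segment_subset (subset_convexHull ℝ s hp) (subset_convexHull ℝ s hr)
  exact hsub this

lemma snd_eq_slp {p q : ℝ × ℝ} (h : p.1 < q.1) : q.2 = p.2 + slp p q * (q.1 - p.1) := by
  rw [slp, div_mul_cancel₀ _ (by intro h0; rw [sub_eq_zero] at h0; exact absurd h0.symm (ne_of_lt h))]
  ring

/-- F1: a cap p,q,r followed by a point b with slp p q < slp p b forces q inside. -/
lemma F1 {p q r b : ℝ × ℝ} (h1 : p.1 < q.1) (h2 : q.1 < r.1) (h3 : r.1 < b.1)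
    (hcap : slp q r < slp p q) (hb : slp p q < slp p b) :
    q ∈ convexHull ℝ ({p, r, b} : Set (ℝ × ℝ)) := by
  have hpr : slp p r < slp p q := slp_gt_left h1 h2 hcap
  have hq2 : q.2 = p.2 + slp p q * (q.1 - p.1) := snd_eq_slp h1
  have hv : (q.1, p.2 + slp p r * (q.1 - p.1)) ∈ convexHull ℝ ({p, r, b} : Set (ℝ×ℝ)) :=
    seg_mem_hull (by simp) (by simp) (h1.trans h2) h1.le h2.le
  have hu : (q.1, p.2 + slp p b * (q.1 - p.1)) ∈ convexHull ℝ ({p, r, b} : Set (ℝ×ℝ)) :=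
    seg_mem_hull (by simp) (by simp) (h1.trans (h2.trans h3)) h1.le (by linarith)
  refine vert_mem hu hv rfl rfl ?_ ?_ <;> dsimp only <;> rw [hq2] <;> nlinarith

/-- F2: a cup q1,q2,q3 preceded by a point a with slp q2 q3 < slp a q3 forces q2 inside. -/
lemma F2 {a q1 q2 q3 : ℝ × ℝ} (h0 : a.1 < q1.1) (h1 : q1.1 < q2.1) (h2 : q2.1 < q3.1)
    (hcup : slp q1 q2 < slp q2 q3) (ha : slp q2 q3 < slp a q3) :
    q2 ∈ convexHull ℝ ({a, q1, q3} : Set (ℝ × ℝ)) := by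
  have hq13 : slp q1 q2 < slp q1 q3 := slp_lt_left h1 h2 hcup
  have hq2 : q2.2 = q1.2 + slp q1 q2 * (q2.1 - q1.1) := snd_eq_slp h1
  -- upper: segment q1 q3 at x = q2.1
  have hu : (q2.1, q1.2 + slp q1 q3 * (q2.1 - q1.1)) ∈ convexHull ℝ ({a, q1, q3} : Set (ℝ×ℝ)) :=
    seg_mem_hull (by simp) (by simp) (h1.trans h2) h1.le h2.le
  -- lower: segment a q3 at x = q2.1
  have hv : (q2.1, a.2 + slp a q3 * (q2.1 - a.1)) ∈ convexHull ℝ ({a, q1, q3} : Set (ℝ×ℝ)) :=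
    seg_mem_hull (by simp) (by simp) (h0.trans (h1.trans h2)) (by linarith) h2.le
  refine vert_mem hu hv rfl rfl ?_ ?_
  · -- a.2 + slp a q3 * (q2.1 - a.1) ≤ q2.2
    have h3 : q3.2 = a.2 + slp a q3 * (q3.1 - a.1) := snd_eq_slp (by linarith)
    have h4 : q3.2 = q2.2 + slp q2 q3 * (q3.1 - q2.1) := snd_eq_slp h2
    dsimp only
    nlinarith
  · dsimp only; rw [hq2]; nlinarith

/-- F3: cross-block middle point forcing. -/
lemma F3 {a p q b : ℝ × ℝ} (h0 : a.1 < p.1) (h1 : p.1 < q.1) (h2 : q.1 < b.1)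
    (hpq : slp p q < slp a p) (hC3 : slp a p < slp p b) :
    p ∈ convexHull ℝ ({a, q, b} : Set (ℝ × ℝ)) := by
  have haq : slp a q < slp a p := slp_gt_left h0 h1 hpq
  have hab : slp a p < slp a b := slp_lt_left h0 (h1.trans h2) hC3
  have hp2 : p.2 = a.2 + slp a p * (p.1 - a.1) := snd_eq_slp h0
  have hv : (p.1, a.2 + slp a q * (p.1 - a.1)) ∈ convexHull ℝ ({a, q, b} : Set (ℝ×ℝ)) :=
    seg_mem_hull (by simp) (by simp) (h0.trans h1) h0.le h1.le
  have hu : (p.1, a.2 + slp a b * (p.1 - a.1)) ∈ convexHull ℝ ({a, q, b} : Set (ℝ×ℝ)) :=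
    seg_mem_hull (by simp) (by simp) (by linarith) h0.le (by linarith)
  refine vert_mem hu hv rfl rfl ?_ ?_ <;> dsimp only <;> rw [hp2] <;> nlinarith

section defs

def DistX (S : Finset (ℝ × ℝ)) : Prop := ∀ p ∈ S, ∀ q ∈ S, p ≠ q → p.1 ≠ q.1

def GenPos (S : Finset (ℝ × ℝ)) : Prop :=
  ∀ p ∈ S, ∀ q ∈ S, ∀ r ∈ S, p.1 < q.1 → q.1 < r.1 → slp p q ≠ slp q r

def Cup (C : Finset (ℝ × ℝ)) : Prop :=
  ∀ p ∈ C, ∀ q ∈ C, ∀ r ∈ C, p.1 < q.1 → q.1 < r.1 → slp p q < slp q r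

def Cap (C : Finset (ℝ × ℝ)) : Prop :=
  ∀ p ∈ C, ∀ q ∈ C, ∀ r ∈ C, p.1 < q.1 → q.1 < r.1 → slp q r < slp p q

def Props (a b : ℕ) (S : Finset (ℝ × ℝ)) : Prop :=
  DistX S ∧ GenPos S ∧ (∀ C ⊆ S, Cup C → C.card ≤ a + 1) ∧ (∀ C ⊆ S, Cap C → C.card ≤ b + 1)

lemma Cup.mono {C D : Finset (ℝ × ℝ)} (h : Cup D) (hsub : C ⊆ D) : Cup C :=
  fun p hp q hq r hr => h p (hsub hp) q (hsub hq) r (hsub hr)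

lemma Cap.mono {C D : Finset (ℝ × ℝ)} (h : Cap D) (hsub : C ⊆ D) : Cap C :=
  fun p hp q hq r hr => h p (hsub hp) q (hsub hq) r (hsub hr)

end defs

section transform

variable {A B C D : ℝ}

noncomputable def tf (A B C D : ℝ) (p : ℝ × ℝ) : ℝ × ℝ := (A * p.1 + B, C * p.2 + D)

lemma tf_inj (hA : 0 < A) (hC : 0 < C) : Function.Injective (tf A B C D) := by
  intro p q h
  simp only [tf, Prod.mk.injEq] at h
  have h1 : p.1 = q.1 := by
    have := h.1; nlinarith [h.1]
  have h2 : p.2 = q.2 := by nlinarith [h.2]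
  exact Prod.ext h1 h2

lemma tf_fst (p : ℝ × ℝ) : (tf A B C D p).1 = A * p.1 + B := rfl
lemma tf_snd (p : ℝ × ℝ) : (tf A B C D p).2 = C * p.2 + D := rfl

lemma tf_fst_lt (hA : 0 < A) {p q : ℝ × ℝ} : (tf A B C D p).1 < (tf A B C D q).1 ↔ p.1 < q.1 := by
  simp only [tf_fst]
  constructor <;> intro h <;> nlinarith

lemma tf_slp (hA : 0 < A) {p q : ℝ × ℝ} (h : p.1 < q.1) :
    slp (tf A B C D p) (tf A B C D q) = (C / A) * slp p q := by
  simp only [slp, tf_fst, tf_snd]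
  have e1 : A * q.1 + B - (A * p.1 + B) = A * (q.1 - p.1) := by ring
  have e2 : C * q.2 + D - (C * p.2 + D) = C * (q.2 - p.2) := by ring
  rw [e1, e2, mul_div_mul_comm]

lemma tf_slp_lt (hA : 0 < A) (hC : 0 < C) {p q p' q' : ℝ × ℝ} (h : p.1 < q.1) (h' : p'.1 < q'.1) :
    slp (tf A B C D p) (tf A B C D q) < slp (tf A B C D p') (tf A B C D q') ↔
      slp p q < slp p' q' := by
  rw [tf_slp hA h, tf_slp hA h']
  have : 0 < C / A := div_pos hC hA
  exact mul_lt_mul_iff_right₀ this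

lemma tf_cup (hA : 0 < A) (hC : 0 < C) {Cs : Finset (ℝ × ℝ)} (hd : DistX Cs)
    (h : Cup (Cs.image (tf A B C D))) : Cup Cs := by
  intro p hp q hq r hr h1 h2
  have := h _ (mem_image_of_mem _ hp) _ (mem_image_of_mem _ hq) _ (mem_image_of_mem _ hr)
    ((tf_fst_lt hA).mpr h1) ((tf_fst_lt hA).mpr h2)
  exact (tf_slp_lt hA hC h1 h2).mp this

lemma tf_cap (hA : 0 < A) (hC : 0 < C) {Cs : Finset (ℝ × ℝ)} (hd : DistX Cs)
    (h : Cap (Cs.image (tf A B C D))) : Cap Cs := by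
  intro p hp q hq r hr h1 h2
  have := h _ (mem_image_of_mem _ hp) _ (mem_image_of_mem _ hq) _ (mem_image_of_mem _ hr)
    ((tf_fst_lt hA).mpr h1) ((tf_fst_lt hA).mpr h2)
  exact (tf_slp_lt hA hC h2 h1).mp this

lemma props_tf {a b : ℕ} {S : Finset (ℝ × ℝ)} (h : Props a b S) (hA : 0 < A) (hC : 0 < C) :
    Props a b (S.image (tf A B C D)) ∧ (S.image (tf A B C D)).card = S.card := by
  obtain ⟨hd, hg, hcup, hcap⟩ := h
  have hinj := tf_inj (B := B) (D := D) hA hC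
  refine ⟨⟨?_, ?_, ?_, ?_⟩, card_image_of_injective _ hinj⟩
  · rintro p hp q hq hne
    obtain ⟨p₀, hp₀, rfl⟩ := mem_image.mp hp
    obtain ⟨q₀, hq₀, rfl⟩ := mem_image.mp hq
    have : p₀ ≠ q₀ := fun hh => hne (by rw [hh])
    have := hd p₀ hp₀ q₀ hq₀ this
    simp only [tf_fst]
    intro hcon
    exact this (by nlinarith)
  · rintro p hp q hq r hr h1 h2
    obtain ⟨p₀, hp₀, rfl⟩ := mem_image.mp hp
    obtain ⟨q₀, hq₀, rfl⟩ := mem_image.mp hq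
    obtain ⟨r₀, hr₀, rfl⟩ := mem_image.mp hr
    rw [tf_fst_lt hA] at h1 h2
    have := hg p₀ hp₀ q₀ hq₀ r₀ hr₀ h1 h2
    rw [tf_slp hA h1, tf_slp hA h2]
    intro hcon
    exact this (mul_left_cancel₀ (ne_of_gt (div_pos hC hA)) hcon)
  · intro Cs hsub hCs
    obtain ⟨Cs₀, hsub₀, rfl⟩ := Finset.subset_image_iff.mp hsub
    rw [card_image_of_injective _ hinj]
    exact hcup Cs₀ hsub₀ (tf_cup hA hC (fun p hp q hq => hd p (hsub₀ hp) q (hsub₀ hq)) hCs)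
  · intro Cs hsub hCs
    obtain ⟨Cs₀, hsub₀, rfl⟩ := Finset.subset_image_iff.mp hsub
    rw [card_image_of_injective _ hinj]
    exact hcap Cs₀ hsub₀ (tf_cap hA hC (fun p hp q hq => hd p (hsub₀ hp) q (hsub₀ hq)) hCs)

end transform
lemma place {a b : ℕ} {S : Finset (ℝ × ℝ)} (h : Props a b S) (hne : S.Nonempty)
    (x0 y0 s : ℝ) (hs : 0 < s) :
    ∃ S' : Finset (ℝ × ℝ), Props a b S' ∧ S'.card = S.card ∧ S'.Nonempty ∧
      (∀ p ∈ S', x0 ≤ p.1 ∧ p.1 ≤ x0 + 1 ∧ y0 ≤ p.2 ∧ p.2 ≤ y0 + 1) ∧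
      (∀ p ∈ S', ∀ q ∈ S', p.1 < q.1 → |slp p q| < s) := by
  classical
  -- x bounds
  set xs := S.image Prod.fst with hxs
  have hxs_ne : xs.Nonempty := hne.image _
  set m := xs.min' hxs_ne with hm
  set M := xs.max' hxs_ne with hM
  have hmM : m ≤ M := min'_le _ _ (max'_mem _ _)
  have hx_lo : ∀ p ∈ S, m ≤ p.1 := fun p hp => min'_le _ _ (mem_image_of_mem _ hp)
  have hx_hi : ∀ p ∈ S, p.1 ≤ M := fun p hp => le_max' _ _ (mem_image_of_mem _ hp)
  -- y bounds
  set ys := S.image Prod.snd with hys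
  have hys_ne : ys.Nonempty := hne.image _
  set my := ys.min' hys_ne with hmy
  set My := ys.max' hys_ne with hMy
  have hmMy : my ≤ My := min'_le _ _ (max'_mem _ _)
  have hy_lo : ∀ p ∈ S, my ≤ p.2 := fun p hp => min'_le _ _ (mem_image_of_mem _ hp)
  have hy_hi : ∀ p ∈ S, p.2 ≤ My := fun p hp => le_max' _ _ (mem_image_of_mem _ hp)
  -- slope bound
  set F := (S ×ˢ S).image (fun z => |slp z.1 z.2|) with hF
  have hF_ne : F.Nonempty := (hne.product hne).image _
  set Sb := F.max' hF_ne with hSb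
  have hslp_bd : ∀ p ∈ S, ∀ q ∈ S, |slp p q| ≤ Sb := by
    intro p hp q hq
    have hpq : (p, q) ∈ S ×ˢ S := mem_product.mpr ⟨hp, hq⟩
    exact F.le_max' (|slp p q|) (mem_image.mpr ⟨(p, q), hpq, rfl⟩)
  have hSb_nonneg : 0 ≤ Sb := by
    obtain ⟨p, hp⟩ := hne
    exact le_trans (abs_nonneg (slp p p)) (hslp_bd p hp p hp)
  set A := 1 / (M - m + 1) with hA
  have hApos : 0 < A := by
    rw [hA]; exact div_pos one_pos (by linarith)
  set B := x0 - A * m with hB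
  set Cc := min (1 / (My - my + 1)) (s * A / (Sb + 1)) with hCc
  have hCpos : 0 < Cc := by
    apply lt_min
    · exact div_pos one_pos (by linarith)
    · exact div_pos (mul_pos hs hApos) (by linarith)
  set D := y0 - Cc * my with hD
  obtain ⟨hP, hcard⟩ := props_tf (A := A) (B := B) (C := Cc) (D := D) h hApos hCpos
  refine ⟨S.image (tf A B Cc D), hP, hcard, hne.image _, ?_, ?_⟩
  · rintro p hp
    obtain ⟨p₀, hp₀, rfl⟩ := mem_image.mp hp
    have h1 := hx_lo p₀ hp₀
    have h2 := hx_hi p₀ hp₀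
    have h3 := hy_lo p₀ hp₀
    have h4 := hy_hi p₀ hp₀
    have hA1 : A * (M - m) ≤ 1 := by
      rw [hA]; rw [div_mul_eq_mul_div, div_le_one (by linarith)]; linarith
    have hC1 : Cc * (My - my) ≤ 1 := by
      have : Cc ≤ 1 / (My - my + 1) := min_le_left _ _
      have h5 : Cc * (My - my) ≤ (1 / (My - my + 1)) * (My - my) := by
        apply mul_le_mul_of_nonneg_right this (by linarith)
      apply le_trans h5
      rw [div_mul_eq_mul_div, div_le_one (by linarith)]; linarith
    constructor
    · show x0 ≤ A * p₀.1 + B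
      rw [hB]; nlinarith
    refine ⟨?_, ?_, ?_⟩
    · show A * p₀.1 + B ≤ x0 + 1
      rw [hB]; nlinarith
    · show y0 ≤ Cc * p₀.2 + D
      rw [hD]; nlinarith
    · show Cc * p₀.2 + D ≤ y0 + 1
      rw [hD]; nlinarith
  · rintro p hp q hq hlt
    obtain ⟨p₀, hp₀, rfl⟩ := mem_image.mp hp
    obtain ⟨q₀, hq₀, rfl⟩ := mem_image.mp hq
    have hx : p₀.1 < q₀.1 := by
      by_contra hcon
      push_neg at hcon
      have : A * q₀.1 + B ≤ A * p₀.1 + B := by nlinarith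
      have hlt' : (tf A B Cc D p₀).1 < (tf A B Cc D q₀).1 := hlt
      simp only [tf] at hlt'
      linarith
    have e : slp (tf A B Cc D p₀) (tf A B Cc D q₀) = (Cc / A) * slp p₀ q₀ := by
      simp only [slp, tf]
      have e1 : A * q₀.1 + B - (A * p₀.1 + B) = A * (q₀.1 - p₀.1) := by ring
      have e2 : Cc * q₀.2 + D - (Cc * p₀.2 + D) = Cc * (q₀.2 - p₀.2) := by ring
      rw [e1, e2, mul_div_mul_comm]
    rw [e, abs_mul, abs_of_pos (div_pos hCpos hApos)]
    have hbd := hslp_bd p₀ hp₀ q₀ hq₀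
    have hCc2 : Cc ≤ s * A / (Sb + 1) := min_le_right _ _
    have : Cc / A * |slp p₀ q₀| ≤ Cc / A * Sb := by
      apply mul_le_mul_of_nonneg_left hbd (le_of_lt (div_pos hCpos hApos))
    apply lt_of_le_of_lt this
    rw [div_mul_eq_mul_div, div_lt_iff₀ hApos]
    have : Cc * (Sb + 1) ≤ s * A := by
      rw [hCc] at *
      calc min (1 / (My - my + 1)) (s * A / (Sb + 1)) * (Sb + 1)
          ≤ (s * A / (Sb + 1)) * (Sb + 1) := by
            apply mul_le_mul_of_nonneg_right (min_le_right _ _) (by linarith)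
        _ = s * A := by field_simp
    nlinarith
lemma one_lt_slp {p q : ℝ × ℝ} (hx : 0 < q.1 - p.1) (h : q.1 - p.1 < q.2 - p.2) :
    1 < slp p q := by
  rw [slp, lt_div_iff₀ hx]; linarith

lemma props_singleton (a b : ℕ) : Props a b {((0 : ℝ), (0 : ℝ))} := by
  refine ⟨?_, ?_, ?_, ?_⟩
  · intro p hp q hq hne
    simp only [mem_singleton] at hp hq
    exact absurd (hp.trans hq.symm) hne
  · intro p hp q hq r hr h1 h2
    simp only [mem_singleton] at hp hq hr
    rw [hp, hq] at h1; exact absurd h1 (lt_irrefl _)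
  · intro C hsub _
    calc C.card ≤ _ := card_le_card hsub
      _ = 1 := card_singleton _
      _ ≤ a + 1 := by omega
  · intro C hsub _
    calc C.card ≤ _ := card_le_card hsub
      _ = 1 := card_singleton _
      _ ≤ b + 1 := by omega

lemma blocks : ∀ N a b : ℕ, a + b ≤ N →
    ∃ S : Finset (ℝ × ℝ), S.Nonempty ∧ Props a b S ∧ S.card = (a + b).choose a := by
  intro N
  induction N with
  | zero =>
    intro a b hab
    have ha : a = 0 := by omega
    have hb : b = 0 := by omega
    subst ha; subst hb
    exact ⟨{((0:ℝ),(0:ℝ))}, singleton_nonempty _, props_singleton 0 0, by simp⟩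
  | succ N ih =>
    intro a b hab
    match a, b with
    | 0, b =>
      refine ⟨{((0:ℝ),(0:ℝ))}, singleton_nonempty _, props_singleton 0 b, by simp⟩
    | (a' + 1), 0 =>
      refine ⟨{((0:ℝ),(0:ℝ))}, singleton_nonempty _, props_singleton (a'+1) 0, by simp⟩
    | (a' + 1), (b' + 1) =>
      obtain ⟨L₀, hLne, hLP, hLcard⟩ := ih a' (b' + 1) (by omega)
      obtain ⟨R₀, hRne, hRP, hRcard⟩ := ih (a' + 1) b' (by omega)
      obtain ⟨L, hLP', hLcard', hLne', hLbox, hLslp⟩ := place hLP hLne 0 0 1 one_pos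
      obtain ⟨R, hRP', hRcard', hRne', hRbox, hRslp⟩ := place hRP hRne 2 5 1 one_pos
      -- geometry facts
      have hxLR : ∀ p ∈ L, ∀ q ∈ R, p.1 < q.1 := by
        intro p hp q hq
        have := (hLbox p hp).2.1
        have := (hRbox q hq).1
        linarith
      have hcross : ∀ p ∈ L, ∀ q ∈ R, 1 < slp p q := by
        intro p hp q hq
        obtain ⟨_, h2, _, h4⟩ := hLbox p hp
        obtain ⟨h5, h6, h7, _⟩ := hRbox q hq
        apply one_lt_slp <;> linarith
      have hdisj : Disjoint L R := by
        rw [disjoint_left]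
        intro p hpL hpR
        have := (hLbox p hpL).2.1
        have := (hRbox p hpR).1
        linarith
      refine ⟨L ∪ R, hLne'.mono subset_union_left, ⟨?_, ?_, ?_, ?_⟩, ?_⟩
      · -- DistX
        intro p hp q hq hne
        rcases mem_union.mp hp with hpL | hpR <;> rcases mem_union.mp hq with hqL | hqR
        · exact hLP'.1 p hpL q hqL hne
        · exact ne_of_lt (hxLR p hpL q hqR)
        · exact (ne_of_lt (hxLR q hqL p hpR)).symm
        · exact hRP'.1 p hpR q hqR hne
      · -- GenPos
        intro p hp q hq r hr h1 h2
        rcases mem_union.mp hp with hpL | hpR <;> rcases mem_union.mp hq with hqL | hqR <;>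
          rcases mem_union.mp hr with hrL | hrR
        · exact hLP'.2.1 p hpL q hqL r hrL h1 h2
        · -- p q ∈ L, r ∈ R : slp p q small, slp q r big
          have hs1 : |slp p q| < 1 := hLslp p hpL q hqL h1
          have hs2 : 1 < slp q r := hcross q hqL r hrR
          intro hcon; rw [hcon] at hs1; rw [abs_lt] at hs1; linarith
        · exact absurd h2 (not_lt.mpr (hxLR r hrL q hqR).le)
        · have hs1 : 1 < slp p q := hcross p hpL q hqR
          have hs2 : |slp q r| < 1 := hRslp q hqR r hrR h2
          intro hcon; rw [← hcon] at hs2; rw [abs_lt] at hs2; linarith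
        · exact absurd h1 (not_lt.mpr (hxLR q hqL p hpR).le)
        · exact absurd h1 (not_lt.mpr (hxLR q hqL p hpR).le)
        · exact absurd h2 (not_lt.mpr (hxLR r hrL q hqR).le)
        · exact hRP'.2.1 p hpR q hqR r hrR h1 h2
      · -- Cup bound
        intro Cs hsub hcup
        by_cases hCL : (Cs ∩ L).Nonempty
        · -- at most one point in R
          have hCR : (Cs ∩ R).card ≤ 1 := by
            by_contra hcon
            push_neg at hcon
            obtain ⟨q, hq, r, hr, hqr⟩ := Finset.one_lt_card.mp hcon
            simp only [mem_inter] at hq hr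
            obtain ⟨p, hp⟩ := hCL
            simp only [mem_inter] at hp
            have hxqr : q.1 ≠ r.1 := hRP'.1 q hq.2 r hr.2 hqr
            rcases lt_or_gt_of_ne hxqr with hlt | hgt
            · have := hcup p hp.1 q hq.1 r hr.1 (hxLR p hp.2 q hq.2) hlt
              have h1 := hcross p hp.2 q hq.2
              have h2 := hRslp q hq.2 r hr.2 hlt
              rw [abs_lt] at h2; linarith
            · have := hcup p hp.1 r hr.1 q hq.1 (hxLR p hp.2 r hr.2) hgt
              have h1 := hcross p hp.2 r hr.2
              have h2 := hRslp r hr.2 q hq.2 hgt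
              rw [abs_lt] at h2; linarith
          have hCLcard : (Cs ∩ L).card ≤ a' + 1 :=
            hLP'.2.2.1 _ inter_subset_right (fun p hp q hq r hr =>
              hcup p (mem_of_mem_inter_left hp) q (mem_of_mem_inter_left hq) r
                (mem_of_mem_inter_left hr))
          have : Cs = (Cs ∩ L) ∪ (Cs ∩ R) := by
            rw [← inter_union_distrib_left]
            exact (inter_eq_left.mpr hsub).symm
          calc Cs.card = ((Cs ∩ L) ∪ (Cs ∩ R)).card := by rw [← this]
            _ ≤ (Cs ∩ L).card + (Cs ∩ R).card := card_union_le _ _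
            _ ≤ a' + 1 + 1 := by omega
        · -- Cs ⊆ R
          have hsubR : Cs ⊆ R := by
            intro p hp
            rcases mem_union.mp (hsub hp) with h | h
            · exact absurd ⟨p, mem_inter.mpr ⟨hp, h⟩⟩ hCL
            · exact h
          have := hRP'.2.2.1 _ hsubR hcup
          omega
      · -- Cap bound
        intro Cs hsub hcap
        by_cases hCR : (Cs ∩ R).Nonempty
        · have hCLc : (Cs ∩ L).card ≤ 1 := by
            by_contra hcon
            push_neg at hcon
            obtain ⟨p, hp, q, hq, hpq⟩ := Finset.one_lt_card.mp hcon
            simp only [mem_inter] at hp hq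
            obtain ⟨r, hr⟩ := hCR
            simp only [mem_inter] at hr
            have hxpq : p.1 ≠ q.1 := hLP'.1 p hp.2 q hq.2 hpq
            rcases lt_or_gt_of_ne hxpq with hlt | hgt
            · have := hcap p hp.1 q hq.1 r hr.1 hlt (hxLR q hq.2 r hr.2)
              have h1 := hcross q hq.2 r hr.2
              have h2 := hLslp p hp.2 q hq.2 hlt
              rw [abs_lt] at h2; linarith
            · have := hcap q hq.1 p hp.1 r hr.1 hgt (hxLR p hp.2 r hr.2)
              have h1 := hcross p hp.2 r hr.2
              have h2 := hLslp q hq.2 p hp.2 hgt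
              rw [abs_lt] at h2; linarith
          have hCRcard : (Cs ∩ R).card ≤ b' + 1 :=
            hRP'.2.2.2 _ inter_subset_right (fun p hp q hq r hr =>
              hcap p (mem_of_mem_inter_left hp) q (mem_of_mem_inter_left hq) r
                (mem_of_mem_inter_left hr))
          have : Cs = (Cs ∩ L) ∪ (Cs ∩ R) := by
            rw [← inter_union_distrib_left]
            exact (inter_eq_left.mpr hsub).symm
          calc Cs.card = ((Cs ∩ L) ∪ (Cs ∩ R)).card := by rw [← this]
            _ ≤ (Cs ∩ L).card + (Cs ∩ R).card := card_union_le _ _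
            _ ≤ b' + 1 + 1 := by omega
        · have hsubL : Cs ⊆ L := by
            intro p hp
            rcases mem_union.mp (hsub hp) with h | h
            · exact h
            · exact absurd ⟨p, mem_inter.mpr ⟨hp, h⟩⟩ hCR
          have := hLP'.2.2.2 _ hsubL hcap
          omega
      · -- cardinality
        rw [card_union_of_disjoint hdisj, hLcard', hRcard', hLcard, hRcard]
        have e1 : a' + (b' + 1) = a' + b' + 1 := by omega
        have e2 : a' + 1 + b' = a' + b' + 1 := by omega
        have e3 : a' + 1 + (b' + 1) = (a' + b' + 1) + 1 := by omega
        rw [e1, e2, e3]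
        exact (Nat.choose_succ_succ (a' + b' + 1) a').symm
lemma pow_twelve (d : ℕ) (hd : 1 ≤ d) : 12 * (d : ℝ) ≤ 12 ^ d := by
  induction d with
  | zero => omega
  | succ d ih =>
    rcases Nat.eq_or_lt_of_le hd with he | hlt
    · simp [← he]
    · have hd1 : 1 ≤ d := by omega
      have := ih hd1
      have h12 : (1:ℝ) ≤ 12 ^ d := one_le_pow₀ (by norm_num)
      rw [pow_succ]
      push_cast
      have hd1' : (1:ℝ) ≤ (d:ℝ) := by exact_mod_cast hd1
      nlinarith

lemma one_le_pow12 (d : ℕ) : (1:ℝ) ≤ 12 ^ d := one_le_pow₀ (by norm_num)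

/-- cross-slope lower bound between boxes -/
lemma crossC2 {i j : ℕ} (hij : i < j) {p q : ℝ × ℝ}
    (hp1 : 3*(i:ℝ) ≤ p.1) (hp2 : p.1 ≤ 3*(i:ℝ)+1) (hp3 : (12:ℝ)^(i+1) ≤ p.2) (hp4 : p.2 ≤ (12:ℝ)^(i+1)+1)
    (hq1 : 3*(j:ℝ) ≤ q.1) (hq2 : q.1 ≤ 3*(j:ℝ)+1) (hq3 : (12:ℝ)^(j+1) ≤ q.2) (hq4 : q.2 ≤ (12:ℝ)^(j+1)+1) :
    p.1 < q.1 ∧ 1 < slp p q := by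
  have hd : 1 ≤ j - i := by omega
  have hcast : (j:ℝ) - i = ((j - i : ℕ) : ℝ) := by
    push_cast [Nat.cast_sub hij.le]; ring
  have hQ : 12 * ((j - i : ℕ) : ℝ) ≤ 12 ^ (j - i) := pow_twelve _ hd
  have hPQ : (12:ℝ) ^ (j + 1) = 12 ^ (i+1) * 12 ^ (j - i) := by
    rw [← pow_add]; congr 1; omega
  have hP1 : (1:ℝ) ≤ 12 ^ (i+1) := one_le_pow12 _
  have hd1 : (1:ℝ) ≤ ((j - i : ℕ) : ℝ) := by exact_mod_cast hd
  have hij' : (i:ℝ) + 1 ≤ j := by exact_mod_cast hij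
  have hx : p.1 < q.1 := by nlinarith
  refine ⟨hx, ?_⟩
  rw [slp, lt_div_iff₀ (by linarith)]
  -- q.2 - p.2 ≥ 12^(j+1) - 12^(i+1) - 1 ≥ 12^(i+1)(12^d - 1) - 1 ≥ 12d - 2 ; q.1 - p.1 ≤ 3d+1
  nlinarith [mul_le_mul hP1 (show (12:ℝ) * ((j - i : ℕ) : ℝ) - 1 ≤ 12 ^ (j-i) - 1 by linarith)
      (by linarith : (0:ℝ) ≤ 12 * ((j - i : ℕ) : ℝ) - 1) (by positivity : (0:ℝ) ≤ 12 ^ (i+1))]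

/-- cross-slope comparison between three boxes -/
lemma crossC3 {i j k : ℕ} (hij : i < j) (hjk : j < k) {p q r : ℝ × ℝ}
    (hp1 : 3*(i:ℝ) ≤ p.1) (hp2 : p.1 ≤ 3*(i:ℝ)+1) (hp3 : (12:ℝ)^(i+1) ≤ p.2) (hp4 : p.2 ≤ (12:ℝ)^(i+1)+1)
    (hq1 : 3*(j:ℝ) ≤ q.1) (hq2 : q.1 ≤ 3*(j:ℝ)+1) (hq3 : (12:ℝ)^(j+1) ≤ q.2) (hq4 : q.2 ≤ (12:ℝ)^(j+1)+1)
    (hr1 : 3*(k:ℝ) ≤ r.1) (hr2 : r.1 ≤ 3*(k:ℝ)+1) (hr3 : (12:ℝ)^(k+1) ≤ r.2) (hr4 : r.2 ≤ (12:ℝ)^(k+1)+1) :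
    slp p q < slp q r := by
  have hd : 1 ≤ k - j := by omega
  have hQ : 12 * ((k - j : ℕ) : ℝ) ≤ 12 ^ (k - j) := pow_twelve _ hd
  have hPQ : (12:ℝ) ^ (k + 1) = 12 ^ (j+1) * 12 ^ (k - j) := by
    rw [← pow_add]; congr 1; omega
  have hP1 : (1:ℝ) ≤ 12 ^ (j+1) := one_le_pow12 _
  have hR1 : (1:ℝ) ≤ 12 ^ (i+1) := one_le_pow12 _
  have hd1 : (1:ℝ) ≤ ((k - j : ℕ) : ℝ) := by exact_mod_cast hd
  have hdk : ((k - j : ℕ) : ℝ) = (k:ℝ) - j := by push_cast [Nat.cast_sub hjk.le]; ring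
  have hij' : (i:ℝ) + 1 ≤ j := by exact_mod_cast hij
  have hjk' : (j:ℝ) + 1 ≤ k := by exact_mod_cast hjk
  have hxpq : 2 ≤ q.1 - p.1 := by linarith
  have hxqr : r.1 - q.1 ≤ 3 * ((k - j : ℕ) : ℝ) + 1 := by rw [hdk]; linarith
  have hxqr' : 0 < r.1 - q.1 := by linarith
  have hypq : q.2 - p.2 ≤ 12 ^ (j+1) := by linarith
  have hyqr : 12 ^ (j+1) * 12 ^ (k-j) - 12 ^ (j+1) - 1 ≤ r.2 - q.2 := by
    rw [← hPQ]; linarith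
  have hyqr' : (0:ℝ) < 12 ^ (j+1) * 12 ^ (k-j) - 12 ^ (j+1) - 1 := by nlinarith
  have hypq' : 0 ≤ q.2 - p.2 := by
    -- q.2 ≥ 12^(j+1) ≥ 12 * 12^(i+1) ≥ 12^(i+1) + 1 + something ≥ p.2
    have h12 : (12:ℝ) ^ (j+1) = 12 ^ (i+1) * 12 ^ (j - i) := by
      rw [← pow_add]; congr 1; omega
    have : (12:ℝ) ≤ 12 ^ (j - i) := by
      calc (12:ℝ) = 12 * 1 := by ring
        _ ≤ 12 * ((j - i : ℕ):ℝ) := by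
            have : 1 ≤ j - i := by omega
            have : (1:ℝ) ≤ ((j - i : ℕ):ℝ) := by exact_mod_cast this
            linarith
        _ ≤ 12 ^ (j - i) := pow_twelve _ (by omega)
    nlinarith
  rw [slp, slp, div_lt_div_iff₀ (by linarith) (by linarith)]
  have H1 : (q.2 - p.2) * (r.1 - q.1) ≤ 12 ^ (j+1) * (3 * ((k - j : ℕ) : ℝ) + 1) :=
    mul_le_mul hypq hxqr (le_of_lt hxqr') (by positivity)
  have H2 : (12 ^ (j+1) * 12 ^ (k-j) - 12 ^ (j+1) - 1) * 2 ≤ (r.2 - q.2) * (q.1 - p.1) :=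
    mul_le_mul hyqr hxpq (by norm_num) (by linarith)
  have H3 : 12 ^ (j+1) * (12 * ((k - j : ℕ) : ℝ)) ≤ 12 ^ (j+1) * 12 ^ (k-j) :=
    mul_le_mul_of_nonneg_left hQ (by positivity)
  have H4 : 12 ^ (j+1) * 1 ≤ 12 ^ (j+1) * ((k - j : ℕ) : ℝ) :=
    mul_le_mul_of_nonneg_left hd1 (by positivity)
  nlinarith
lemma noncol {p q r : ℝ × ℝ} (h1 : p.1 < q.1) (h2 : q.1 < r.1) (hs : slp p q ≠ slp q r) :
    ¬ Collinear ℝ ({p, q, r} : Set (ℝ × ℝ)) := by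
  intro hcol
  obtain ⟨v, hv⟩ := (collinear_iff_of_mem (show p ∈ ({p,q,r} : Set (ℝ×ℝ)) by simp)).mp hcol
  obtain ⟨tq, htq⟩ := hv q (by simp)
  obtain ⟨tr, htr⟩ := hv r (by simp)
  have hq1 : q.1 = tq * v.1 + p.1 := by rw [htq]; rfl
  have hq2 : q.2 = tq * v.2 + p.2 := by rw [htq]; rfl
  have hr1 : r.1 = tr * v.1 + p.1 := by rw [htr]; rfl
  have hr2 : r.2 = tr * v.2 + p.2 := by rw [htr]; rfl
  have hv1 : v.1 ≠ 0 := by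
    intro h0; rw [h0] at hq1; simp at hq1; linarith
  have htq0 : tq ≠ 0 := by
    intro h0; rw [h0] at hq1; simp at hq1; linarith
  have htqr : tr - tq ≠ 0 := by
    intro h0
    have : tr = tq := by linarith
    rw [this] at hr1; rw [← hq1] at hr1; linarith
  apply hs
  rw [slp, slp, hq1, hq2, hr1, hr2]
  have e1 : tq * v.2 + p.2 - p.2 = tq * v.2 := by ring
  have e2 : tq * v.1 + p.1 - p.1 = tq * v.1 := by ring
  have e3 : tr * v.2 + p.2 - (tq * v.2 + p.2) = (tr - tq) * v.2 := by ring
  have e4 : tr * v.1 + p.1 - (tq * v.1 + p.1) = (tr - tq) * v.1 := by ring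
  rw [e1, e2, e3, e4, mul_div_mul_left _ _ htq0, mul_div_mul_left _ _ htqr]

lemma noThree {S : Finset (ℝ × ℝ)} (hd : DistX S) (hg : GenPos S) :
    NoThreeCollinear (↑S : Set (ℝ × ℝ)) := by
  intro p hp q hq r hr hpq hpr hqr
  simp only [Finset.mem_coe] at hp hq hr
  rw [affineIndependent_iff_not_collinear_set]
  have hx_pq : p.1 ≠ q.1 := hd p hp q hq hpq
  have hx_pr : p.1 ≠ r.1 := hd p hp r hr hpr
  have hx_qr : q.1 ≠ r.1 := hd q hq r hr hqr
  -- sort by x-coordinate; six cases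
  rcases lt_or_gt_of_ne hx_pq with h1 | h1 <;> rcases lt_or_gt_of_ne hx_pr with h2 | h2 <;>
    rcases lt_or_gt_of_ne hx_qr with h3 | h3
  · exact noncol h1 h3 (hg p hp q hq r hr h1 h3)
  · -- p<q, p<r, r<q : p r q
    have : ({p, q, r} : Set (ℝ×ℝ)) = {p, r, q} := by ext x; simp; tauto
    rw [this]
    exact noncol h2 h3 (hg p hp r hr q hq h2 h3)
  · -- r<p<q<r impossible
    exact absurd ((h2.trans h1).trans h3) (lt_irrefl _)
  · -- r < p < q : r p q
    have : ({p, q, r} : Set (ℝ×ℝ)) = {r, p, q} := by ext x; simp; tauto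
    rw [this]
    exact noncol h2 h1 (hg r hr p hp q hq h2 h1)
  · -- q < p < r : q p r
    have : ({p, q, r} : Set (ℝ×ℝ)) = {q, p, r} := by ext x; simp; tauto
    rw [this]
    exact noncol h1 h2 (hg q hq p hp r hr h1 h2)
  · -- r<q<p<r impossible
    exact absurd ((h3.trans h1).trans h2) (lt_irrefl _)
  · -- q < r < p : q r p
    have : ({p, q, r} : Set (ℝ×ℝ)) = {q, r, p} := by ext x; simp; tauto
    rw [this]
    exact noncol h3 h2 (hg q hq r hr p hp h3 h2)
  · -- r < q < p : r q p
    have : ({p, q, r} : Set (ℝ×ℝ)) = {r, q, p} := by ext x; simp; tauto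
    rw [this]
    exact noncol h3 h1 (hg r hr q hq p hp h3 h1)

lemma slp_eq_trans' {a p b : ℝ × ℝ} (h1 : a.1 < p.1) (h2 : p.1 < b.1)
    (h : slp a p = slp a b) : slp a p = slp p b := by
  rw [slp_eq_iff h1 (h1.trans h2)] at h
  rw [slp_eq_iff h1 h2]
  nlinarith [h]

end ESLB

open ESLB

theorem erdos_szekeres_lower_bound (n : ℕ) (hn : 2 ≤ n) :
    ∃ S : Finset (ℝ × ℝ), S.card = 2 ^ (n - 2) ∧ NoThreeCollinear ↑S ∧
      ¬ ∃ T : Finset (ℝ × ℝ), T ⊆ S ∧ T.card = n ∧ ConvexIndep ↑T := by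
  classical
  set m := n - 2 with hm
  -- construct the blocks
  have hBex : ∀ i : ℕ, ∃ Bi : Finset (ℝ × ℝ), Props i (m - i) Bi ∧
      Bi.card = (i + (m - i)).choose i ∧ Bi.Nonempty ∧
      (∀ p ∈ Bi, 3*(i:ℝ) ≤ p.1 ∧ p.1 ≤ 3*(i:ℝ) + 1 ∧ (12:ℝ)^(i+1) ≤ p.2 ∧ p.2 ≤ (12:ℝ)^(i+1) + 1) ∧
      (∀ p ∈ Bi, ∀ q ∈ Bi, p.1 < q.1 → |slp p q| < 1) := by
    intro i
    obtain ⟨S₀, hS₀ne, hS₀P, hS₀card⟩ := blocks (i + (m - i)) i (m - i) le_rfl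
    obtain ⟨S', hP', hcard', hne', hbox', hslp'⟩ :=
      place hS₀P hS₀ne (3*(i:ℝ)) ((12:ℝ)^(i+1)) 1 one_pos
    exact ⟨S', hP', by rw [hcard', hS₀card], hne', hbox', hslp'⟩
  choose B hBP hBcard hBne hBbox hBslp using hBex
  -- basic cross-block facts
  have hxord : ∀ {i j : ℕ}, i < j → ∀ p ∈ B i, ∀ q ∈ B j, p.1 < q.1 := by
    intro i j hij p hp q hq
    have h1 := (hBbox i p hp).2.1
    have h2 := (hBbox j q hq).1
    have : (i:ℝ) + 1 ≤ j := by exact_mod_cast hij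
    linarith
  have hC2 : ∀ {i j : ℕ}, i < j → ∀ p ∈ B i, ∀ q ∈ B j, 1 < slp p q := by
    intro i j hij p hp q hq
    obtain ⟨a1, a2, a3, a4⟩ := hBbox i p hp
    obtain ⟨b1, b2, b3, b4⟩ := hBbox j q hq
    exact (crossC2 hij a1 a2 a3 a4 b1 b2 b3 b4).2
  have hC3 : ∀ {i j k : ℕ}, i < j → j < k → ∀ p ∈ B i, ∀ q ∈ B j, ∀ r ∈ B k,
      slp p q < slp q r := by
    intro i j k hij hjk p hp q hq r hr
    obtain ⟨a1, a2, a3, a4⟩ := hBbox i p hp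
    obtain ⟨b1, b2, b3, b4⟩ := hBbox j q hq
    obtain ⟨c1, c2, c3, c4⟩ := hBbox k r hr
    exact crossC3 hij hjk a1 a2 a3 a4 b1 b2 b3 b4 c1 c2 c3 c4
  have hdisjB : ∀ i j : ℕ, i ≠ j → Disjoint (B i) (B j) := by
    intro i j hij
    rw [disjoint_left]
    intro p hpi hpj
    rcases lt_or_gt_of_ne hij with h | h
    · exact absurd (hxord h p hpi p hpj) (lt_irrefl _)
    · exact absurd (hxord h p hpj p hpi) (lt_irrefl _)
  set S := (range (m+1)).biUnion B with hS
  -- block of a point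
  have hblk : ∀ p ∈ S, ∃ i, i ∈ range (m+1) ∧ p ∈ B i := by
    intro p hp
    obtain ⟨i, hi, hpi⟩ := mem_biUnion.mp hp
    exact ⟨i, hi, hpi⟩
  have hdistX : DistX S := by
    intro p hp q hq hne
    obtain ⟨i, hi, hpi⟩ := hblk p hp
    obtain ⟨j, hj, hqj⟩ := hblk q hq
    rcases lt_trichotomy i j with h | h | h
    · exact ne_of_lt (hxord h p hpi q hqj)
    · subst h; exact (hBP i).1 p hpi q hqj hne
    · exact (ne_of_lt (hxord h q hqj p hpi)).symm
  have hgenpos : GenPos S := by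
    intro p hp q hq r hr h1 h2
    obtain ⟨i, hi, hpi⟩ := hblk p hp
    obtain ⟨j, hj, hqj⟩ := hblk q hq
    obtain ⟨k, hk, hrk⟩ := hblk r hr
    have hij : i ≤ j := by
      by_contra hcon
      push_neg at hcon
      exact absurd h1 (not_lt.mpr (hxord hcon q hqj p hpi).le)
    have hjk : j ≤ k := by
      by_contra hcon
      push_neg at hcon
      exact absurd h2 (not_lt.mpr (hxord hcon r hrk q hqj).le)
    rcases eq_or_lt_of_le hij with he1 | hl1 <;> rcases eq_or_lt_of_le hjk with he2 | hl2
    · subst he1; subst he2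
      exact (hBP i).2.1 p hpi q hqj r hrk h1 h2
    · subst he1
      have hs1 := hBslp i p hpi q hqj h1
      have hs2 := hC2 hl2 q hqj r hrk
      rw [abs_lt] at hs1
      intro hcon; rw [hcon] at hs1; linarith
    · subst he2
      have hs1 := hC2 hl1 p hpi q hqj
      have hs2 := hBslp j q hqj r hrk h2
      rw [abs_lt] at hs2
      intro hcon; rw [← hcon] at hs2; linarith
    · exact ne_of_lt (hC3 hl1 hl2 p hpi q hqj r hrk)
  refine ⟨S, ?_, noThree hdistX hgenpos, ?_⟩
  · -- cardinality
    rw [hS, card_biUnion (fun i hi j hj hij => hdisjB i j hij)]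
    have : ∀ i ∈ range (m+1), (B i).card = m.choose i := by
      intro i hi
      rw [hBcard i]
      congr 1
      rw [mem_range] at hi
      omega
    rw [sum_congr rfl this, Nat.sum_range_choose]
  · -- no n points in convex position
    rintro ⟨T, hTsub, hTcard, hTconv⟩
    have hTS : ∀ x ∈ T, x ∈ S := fun x hx => hTsub hx
    -- key contradiction helpers
    have key3 : ∀ x ∈ T, ∀ u ∈ T, ∀ v ∈ T, ∀ w ∈ T, u ≠ x → v ≠ x → w ≠ x →
        x ∈ convexHull ℝ ({u, v, w} : Set (ℝ × ℝ)) → False := by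
      intro x hx u hu v hv w hw hux hvx hwx hmem
      apply hTconv x (Finset.mem_coe.mpr hx)
      refine convexHull_mono ?_ hmem
      intro y hy
      simp only [Set.mem_insert_iff, Set.mem_singleton_iff] at hy
      rcases hy with rfl | rfl | rfl <;>
        exact Set.mem_diff_singleton.mpr ⟨Finset.mem_coe.mpr (by assumption), by assumption⟩
    have key4 : ∀ x ∈ T, ∀ u ∈ T, ∀ v ∈ T, ∀ w ∈ T, ∀ z ∈ T,
        u ≠ x → v ≠ x → w ≠ x → z ≠ x →
        x ∈ convexHull ℝ ({u, v, w, z} : Set (ℝ × ℝ)) → False := by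
      intro x hx u hu v hv w hw z hz hux hvx hwx hzx hmem
      apply hTconv x (Finset.mem_coe.mpr hx)
      refine convexHull_mono ?_ hmem
      intro y hy
      simp only [Set.mem_insert_iff, Set.mem_singleton_iff] at hy
      rcases hy with rfl | rfl | rfl | rfl <;>
        exact Set.mem_diff_singleton.mpr ⟨Finset.mem_coe.mpr (by assumption), by assumption⟩
    -- decomposition of T into blocks
    set f : ℕ → Finset (ℝ × ℝ) := fun i => T ∩ B i with hf
    have hfT : ∀ i, f i ⊆ T := fun i => inter_subset_left
    have hfB : ∀ i, f i ⊆ B i := fun i => inter_subset_right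
    have hTdec : T = (range (m+1)).biUnion f := by
      ext x
      simp only [mem_biUnion]
      constructor
      · intro hx
        obtain ⟨i, hi, hxi⟩ := hblk x (hTS x hx)
        exact ⟨i, hi, mem_inter.mpr ⟨hx, hxi⟩⟩
      · rintro ⟨i, hi, hxi⟩
        exact (hfT i) hxi
    have hsum : n = ∑ i ∈ range (m+1), (f i).card := by
      rw [← hTcard]
      conv_lhs => rw [hTdec]
      exact card_biUnion (fun i hi j hj hij =>
        disjoint_of_subset_left (hfB i) ((hdisjB i j hij).mono_right (hfB j)))
    set I := (range (m+1)).filter (fun i => (f i).Nonempty) with hI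
    have hTne : T.Nonempty := card_pos.mp (by omega)
    have hIne : I.Nonempty := by
      obtain ⟨x, hx⟩ := hTne
      obtain ⟨i, hi, hxi⟩ := hblk x (hTS x hx)
      exact ⟨i, mem_filter.mpr ⟨hi, ⟨x, mem_inter.mpr ⟨hx, hxi⟩⟩⟩⟩
    set i1 := I.min' hIne with hi1
    set it := I.max' hIne with hit
    have hi1I : i1 ∈ I := I.min'_mem hIne
    have hitI : it ∈ I := I.max'_mem hIne
    have hi1m : i1 ≤ m := by have := (mem_filter.mp hi1I).1; rw [mem_range] at this; omega
    have hitm : it ≤ m := by have := (mem_filter.mp hitI).1; rw [mem_range] at this; omega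
    have hi1it : i1 ≤ it := I.min'_le it hitI
    have hIbd : ∀ i ∈ I, i1 ≤ i ∧ i ≤ it := fun i hi => ⟨I.min'_le i hi, I.le_max' i hi⟩
    have hInem : ∀ i, (f i).Nonempty → i ∈ I := by
      intro i hne
      obtain ⟨x, hx⟩ := hne
      have hxB := (hfB i) hx
      obtain ⟨j, hj, hxj⟩ := hblk x (hTS x ((hfT i) hx))
      have : i = j := by
        by_contra hcon
        exact (disjoint_left.mp (hdisjB i j hcon)) hxB hxj
      subst this
      exact mem_filter.mpr ⟨hj, ⟨x, hx⟩⟩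
    have hIzero : ∀ i, i ∉ I → f i = ∅ := by
      intro i hi
      by_contra hcon
      exact hi (hInem i (nonempty_iff_ne_empty.mpr hcon))
    obtain ⟨a', ha'⟩ := (mem_filter.mp hi1I).2
    obtain ⟨b', hb'⟩ := (mem_filter.mp hitI).2
    have ha'T : a' ∈ T := (hfT i1) ha'
    have hb'T : b' ∈ T := (hfT it) hb'
    have ha'B : a' ∈ B i1 := (hfB i1) ha'
    have hb'B : b' ∈ B it := (hfB it) hb'
    rcases eq_or_lt_of_le hi1it with hcase | hcase
    · -- all of T inside one block
      have hTB : T ⊆ B i1 := by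
        intro x hx
        obtain ⟨i, hi, hxi⟩ := hblk x (hTS x hx)
        have hiI : i ∈ I := hInem i ⟨x, mem_inter.mpr ⟨hx, hxi⟩⟩
        have := hIbd i hiI
        have : i = i1 := by omega
        subst this; exact hxi
      -- single-block analysis: split into upper cap and lower cup through extreme points
      obtain ⟨a, haT, hamin⟩ := T.exists_min_image Prod.fst hTne
      obtain ⟨b, hbT, hbmax⟩ := T.exists_max_image Prod.fst hTne
      have hxa : ∀ p ∈ T, p ≠ a → a.1 < p.1 := by
        intro p hp hne
        rcases lt_or_eq_of_le (hamin p hp) with h | h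
        · exact h
        · exact absurd h.symm (hdistX p (hTS p hp) a (hTS a haT) hne)
      have hxb : ∀ p ∈ T, p ≠ b → p.1 < b.1 := by
        intro p hp hne
        rcases lt_or_eq_of_le (hbmax p hp) with h | h
        · exact h
        · exact absurd h (hdistX p (hTS p hp) b (hTS b hbT) hne)
      have hab : a ≠ b := by
        intro hh
        have hall : ∀ p ∈ T, p = a := by
          intro p hp
          by_contra hne
          have h1 := hxa p hp hne
          have h2 := hxb p hp (by rw [← hh]; exact hne)
          rw [← hh] at h2; linarith
        have hsub' : T ⊆ {a} := fun p hp => Finset.mem_singleton.mpr (hall p hp)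
        have := card_le_card hsub'
        rw [card_singleton] at this
        omega
      have hab1 : a.1 < b.1 := hxa b hbT (Ne.symm hab)
      have htri : ∀ p ∈ T, p ≠ a → p ≠ b → slp a b < slp a p ∨ slp a p < slp a b := by
        intro p hp hpa hpb
        rcases lt_trichotomy (slp a p) (slp a b) with h | h | h
        · right; exact h
        · exfalso
          have h1 : a.1 < p.1 := hxa p hp hpa
          have h2 : p.1 < b.1 := hxb p hp hpb
          exact (hgenpos a (hTS a haT) p (hTS p hp) b (hTS b hbT) h1 h2) (slp_eq_trans' h1 h2 h)
        · left; exact h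
      set U0 := T.filter (fun p => p ≠ a ∧ p ≠ b ∧ slp a b < slp a p) with hU0
      set L0 := T.filter (fun p => p ≠ a ∧ p ≠ b ∧ slp a p < slp a b) with hL0
      have hUsubT : U0 ∪ {a, b} ⊆ T := by
        intro x hx
        rcases mem_union.mp hx with h | h
        · exact (filter_subset _ _) h
        · rcases mem_insert.mp h with rfl | h'
          · exact haT
          · rw [Finset.mem_singleton.mp h']; exact hbT
      have hLsubT : L0 ∪ {a, b} ⊆ T := by
        intro x hx
        rcases mem_union.mp hx with h | h
        · exact (filter_subset _ _) h
        · rcases mem_insert.mp h with rfl | h'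
          · exact haT
          · rw [Finset.mem_singleton.mp h']; exact hbT
      -- the upper part is a cap
      have hUcap : Cap (U0 ∪ {a, b}) := by
        intro p hp q hq r hr h1 h2
        have hpT := hUsubT hp
        have hqT := hUsubT hq
        have hrT := hUsubT hr
        rcases lt_trichotomy (slp q r) (slp p q) with h | h | h
        · exact h
        · exact absurd h.symm (hgenpos p (hTS p hpT) q (hTS q hqT) r (hTS r hrT) h1 h2)
        · exfalso
          -- q is an interior point of U0
          have hqa : q ≠ a := by
            intro hh
            have := hamin p hpT
            rw [hh] at h1; linarith
          have hqb : q ≠ b := by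
            intro hh
            have := hbmax r hrT
            rw [hh] at h2; linarith
          have hqU : q ∈ U0 := by
            rcases mem_union.mp hq with h' | h'
            · exact h'
            · rcases mem_insert.mp h' with rfl | h''
              · exact absurd rfl hqa
              · exact absurd (Finset.mem_singleton.mp h'') hqb
          have hqslp : slp a b < slp a q := (mem_filter.mp hqU).2.2.2
          have haq : a.1 < q.1 := hxa q hqT hqa
          have hqb1 : q.1 < b.1 := hxb q hqT hqb
          have hcup : slp p q < slp p r := slp_lt_left h1 h2 h
          have hq2 : q.2 = p.2 + slp p q * (q.1 - p.1) := snd_eq_slp h1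
          have hq2' : q.2 = a.2 + slp a q * (q.1 - a.1) := snd_eq_slp haq
          have hu : (q.1, p.2 + slp p r * (q.1 - p.1)) ∈
              convexHull ℝ ({p, r, a, b} : Set (ℝ × ℝ)) :=
            seg_mem_hull (by simp) (by simp) (h1.trans h2) h1.le h2.le
          have hv : (q.1, a.2 + slp a b * (q.1 - a.1)) ∈
              convexHull ℝ ({p, r, a, b} : Set (ℝ × ℝ)) :=
            seg_mem_hull (by simp) (by simp) hab1 haq.le hqb1.le
          have hmem : q ∈ convexHull ℝ ({p, r, a, b} : Set (ℝ × ℝ)) := by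
            refine vert_mem hu hv rfl rfl ?_ ?_ <;> dsimp only
            · rw [hq2']; nlinarith
            · rw [hq2]; nlinarith
          exact key4 q hqT p hpT r hrT a haT b hbT
            (fun hh => absurd h1 (by rw [hh]; exact lt_irrefl _))
            (fun hh => absurd h2 (by rw [hh]; exact lt_irrefl _))
            (fun hh => absurd haq (by rw [hh]; exact lt_irrefl _))
            (fun hh => absurd hqb1 (by rw [hh]; exact lt_irrefl _)) hmem
      -- the lower part is a cup
      have hLcup : Cup (L0 ∪ {a, b}) := by
        intro p hp q hq r hr h1 h2
        have hpT := hLsubT hp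
        have hqT := hLsubT hq
        have hrT := hLsubT hr
        rcases lt_trichotomy (slp p q) (slp q r) with h | h | h
        · exact h
        · exact absurd h (hgenpos p (hTS p hpT) q (hTS q hqT) r (hTS r hrT) h1 h2)
        · exfalso
          have hqa : q ≠ a := by
            intro hh
            have := hamin p hpT
            rw [hh] at h1; linarith
          have hqb : q ≠ b := by
            intro hh
            have := hbmax r hrT
            rw [hh] at h2; linarith
          have hqL : q ∈ L0 := by
            rcases mem_union.mp hq with h' | h'
            · exact h'
            · rcases mem_insert.mp h' with rfl | h''
              · exact absurd rfl hqa
              · exact absurd (Finset.mem_singleton.mp h'') hqb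
          have hqslp : slp a q < slp a b := (mem_filter.mp hqL).2.2.2
          have haq : a.1 < q.1 := hxa q hqT hqa
          have hqb1 : q.1 < b.1 := hxb q hqT hqb
          have hcap : slp p r < slp p q := slp_gt_left h1 h2 h
          have hq2 : q.2 = p.2 + slp p q * (q.1 - p.1) := snd_eq_slp h1
          have hq2' : q.2 = a.2 + slp a q * (q.1 - a.1) := snd_eq_slp haq
          have hu : (q.1, a.2 + slp a b * (q.1 - a.1)) ∈
              convexHull ℝ ({p, r, a, b} : Set (ℝ × ℝ)) :=
            seg_mem_hull (by simp) (by simp) hab1 haq.le hqb1.le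
          have hv : (q.1, p.2 + slp p r * (q.1 - p.1)) ∈
              convexHull ℝ ({p, r, a, b} : Set (ℝ × ℝ)) :=
            seg_mem_hull (by simp) (by simp) (h1.trans h2) h1.le h2.le
          have hmem : q ∈ convexHull ℝ ({p, r, a, b} : Set (ℝ × ℝ)) := by
            refine vert_mem hu hv rfl rfl ?_ ?_ <;> dsimp only
            · rw [hq2]; nlinarith
            · rw [hq2']; nlinarith
          exact key4 q hqT p hpT r hrT a haT b hbT
            (fun hh => absurd h1 (by rw [hh]; exact lt_irrefl _))
            (fun hh => absurd h2 (by rw [hh]; exact lt_irrefl _))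
            (fun hh => absurd haq (by rw [hh]; exact lt_irrefl _))
            (fun hh => absurd hqb1 (by rw [hh]; exact lt_irrefl _)) hmem
      -- size bounds
      have hUb : (U0 ∪ {a, b}).card ≤ (m - i1) + 1 :=
        (hBP i1).2.2.2 _ (fun x hx => hTB (hUsubT hx)) hUcap
      have hLb : (L0 ∪ {a, b}).card ≤ i1 + 1 :=
        (hBP i1).2.2.1 _ (fun x hx => hTB (hLsubT hx)) hLcup
      -- count
      have habs : ({a, b} : Finset (ℝ × ℝ)).card = 2 := card_pair hab
      have hUd : Disjoint U0 ({a, b} : Finset (ℝ × ℝ)) := by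
        rw [disjoint_left]
        intro x hx hx'
        obtain ⟨-, hxa', hxb', -⟩ := mem_filter.mp hx
        rcases mem_insert.mp hx' with rfl | h'
        · exact hxa' rfl
        · exact hxb' (Finset.mem_singleton.mp h')
      have hLd : Disjoint L0 ({a, b} : Finset (ℝ × ℝ)) := by
        rw [disjoint_left]
        intro x hx hx'
        obtain ⟨-, hxa', hxb', -⟩ := mem_filter.mp hx
        rcases mem_insert.mp hx' with rfl | h'
        · exact hxa' rfl
        · exact hxb' (Finset.mem_singleton.mp h')
      have hULd : Disjoint U0 (L0 ∪ ({a, b} : Finset (ℝ × ℝ))) := by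
        rw [disjoint_left]
        intro x hx hx'
        obtain ⟨-, -, -, h1⟩ := mem_filter.mp hx
        rcases mem_union.mp hx' with h' | h'
        · obtain ⟨-, -, -, h2⟩ := mem_filter.mp h'
          linarith
        · exact disjoint_left.mp hUd hx h'
      have hdec : T = U0 ∪ (L0 ∪ {a, b}) := by
        ext x
        constructor
        · intro hx
          by_cases h1 : x = a
          · subst h1; exact mem_union_right _ (mem_union_right _ (mem_insert_self _ _))
          by_cases h2 : x = b
          · subst h2
            exact mem_union_right _ (mem_union_right _ (mem_insert_of_mem (Finset.mem_singleton_self _)))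
          rcases htri x hx h1 h2 with h | h
          · exact mem_union_left _ (mem_filter.mpr ⟨hx, h1, h2, h⟩)
          · exact mem_union_right _ (mem_union_left _ (mem_filter.mpr ⟨hx, h1, h2, h⟩))
        · intro hx
          rcases mem_union.mp hx with h | h
          · exact (filter_subset _ _) h
          · exact hLsubT h
      have hcount : T.card = U0.card + (L0.card + 2) := by
        rw [hdec, card_union_of_disjoint hULd, card_union_of_disjoint hLd, habs]
      have hcu : (U0 ∪ {a, b}).card = U0.card + 2 := by
        rw [card_union_of_disjoint hUd, habs]
      have hcl : (L0 ∪ {a, b}).card = L0.card + 2 := by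
        rw [card_union_of_disjoint hLd, habs]
      omega
    · -- at least two blocks
      have hcup1 : Cup (f i1) := by
        intro p hp q hq r hr h1 h2
        have hpB := (hfB i1) hp
        have hqB := (hfB i1) hq
        have hrB := (hfB i1) hr
        rcases lt_trichotomy (slp p q) (slp q r) with h | h | h
        · exact h
        · exact absurd h (hgenpos p (hTS p ((hfT i1) hp)) q (hTS q ((hfT i1) hq))
            r (hTS r ((hfT i1) hr)) h1 h2)
        · exfalso
          have h3 : r.1 < b'.1 := hxord hcase r hrB b' hb'B
          have hb1 : slp p q < slp p b' := by
            have hs1 := hBslp i1 p hpB q hqB h1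
            have hs2 := hC2 hcase p hpB b' hb'B
            rw [abs_lt] at hs1; linarith
          exact key3 q ((hfT i1) hq) p ((hfT i1) hp) r ((hfT i1) hr) b' hb'T
            (fun hh => absurd h1 (by rw [hh]; exact lt_irrefl _))
            (fun hh => absurd h2 (by rw [hh]; exact lt_irrefl _))
            (fun hh => absurd (h2.trans h3) (by rw [hh]; exact lt_irrefl _))
            (F1 h1 h2 h3 h hb1)
      have hcard1 : (f i1).card ≤ i1 + 1 := (hBP i1).2.2.1 _ (hfB i1) hcup1
      have hcapt : Cap (f it) := by
        intro p hp q hq r hr h1 h2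
        have hpB := (hfB it) hp
        have hqB := (hfB it) hq
        have hrB := (hfB it) hr
        rcases lt_trichotomy (slp q r) (slp p q) with h | h | h
        · exact h
        · exact absurd h.symm (hgenpos p (hTS p ((hfT it) hp)) q (hTS q ((hfT it) hq))
            r (hTS r ((hfT it) hr)) h1 h2)
        · exfalso
          have h0 : a'.1 < p.1 := hxord hcase a' ha'B p hpB
          have hcr : slp q r < slp a' r := by
            have hs1 := hBslp it q hqB r hrB h2
            have hs2 := hC2 hcase a' ha'B r hrB
            rw [abs_lt] at hs1; linarith
          exact key3 q ((hfT it) hq) a' ha'T p ((hfT it) hp) r ((hfT it) hr)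
            (fun hh => absurd (h0.trans h1) (by rw [hh]; exact lt_irrefl _))
            (fun hh => absurd h1 (by rw [hh]; exact lt_irrefl _))
            (fun hh => absurd h2 (by rw [hh]; exact lt_irrefl _))
            (F2 h0 h1 h2 h hcr)
      have hcardt : (f it).card ≤ (m - it) + 1 := (hBP it).2.2.2 _ (hfB it) hcapt
      have hmid : ∀ i, i1 < i → i < it → (f i).card ≤ 1 := by
        intro i hl hr2
        by_contra hcon
        push_neg at hcon
        obtain ⟨p, hp, q, hq, hpq⟩ := one_lt_card.mp hcon
        have hpB := (hfB i) hp
        have hqB := (hfB i) hq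
        have hx : p.1 ≠ q.1 := (hBP i).1 p hpB q hqB hpq
        have main : ∀ u ∈ f i, ∀ v ∈ f i, u.1 < v.1 → False := by
          intro u hu v hv huv
          have huB := (hfB i) hu
          have hvB := (hfB i) hv
          have h0 : a'.1 < u.1 := hxord hl a' ha'B u huB
          have h2 : v.1 < b'.1 := hxord hr2 v hvB b' hb'B
          have hin : slp u v < slp a' u := by
            have hs1 := hBslp i u huB v hvB huv
            have hs2 := hC2 hl a' ha'B u huB
            rw [abs_lt] at hs1; linarith
          have hc3 : slp a' u < slp u b' := hC3 hl hr2 a' ha'B u huB b' hb'B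
          exact key3 u ((hfT i) hu) a' ha'T v ((hfT i) hv) b' hb'T
            (fun hh => absurd h0 (by rw [hh]; exact lt_irrefl _))
            (fun hh => absurd huv (by rw [hh]; exact lt_irrefl _))
            (fun hh => absurd (huv.trans h2) (by rw [hh]; exact lt_irrefl _))
            (F3 h0 huv h2 hin hc3)
        rcases lt_or_gt_of_ne hx with h | h
        · exact main p hp q hq h
        · exact main q hq p hp h
      -- sum the contributions
      have hi1r : i1 ∈ range (m+1) := mem_range.mpr (by omega)
      have hitr : it ∈ (range (m+1)).erase i1 :=
        mem_erase.mpr ⟨ne_of_gt hcase, mem_range.mpr (by omega)⟩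
      set s2 := ((range (m+1)).erase i1).erase it with hs2
      have e1 : ∑ i ∈ range (m+1), (f i).card
          = (f i1).card + ∑ i ∈ (range (m+1)).erase i1, (f i).card :=
        (Finset.add_sum_erase _ _ hi1r).symm
      have e2 : ∑ i ∈ (range (m+1)).erase i1, (f i).card
          = (f it).card + ∑ i ∈ s2, (f i).card :=
        (Finset.add_sum_erase _ _ hitr).symm
      have hrest : ∑ i ∈ s2, (f i).card ≤ it - i1 - 1 := by
        have hle : ∀ i ∈ s2, (f i).card ≤ (if i1 < i ∧ i < it then 1 else 0) := by
          intro i hi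
          have hii : i ≠ it := (mem_erase.mp hi).1
          have hii1 : i ≠ i1 := (mem_erase.mp (mem_erase.mp hi).2).1
          by_cases hio : i1 < i ∧ i < it
          · rw [if_pos hio]; exact hmid i hio.1 hio.2
          · rw [if_neg hio]
            have : i ∉ I := by
              intro hiI
              obtain ⟨hb1, hb2⟩ := hIbd i hiI
              exact hio ⟨by omega, by omega⟩
            rw [hIzero i this, card_empty]
        calc ∑ i ∈ s2, (f i).card ≤ ∑ i ∈ s2, (if i1 < i ∧ i < it then 1 else 0) :=
              sum_le_sum hle
          _ = (s2.filter (fun i => i1 < i ∧ i < it)).card := (Finset.card_filter _ _).symm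
          _ ≤ (Finset.Ioo i1 it).card := by
              apply card_le_card
              intro x hx
              rw [Finset.mem_Ioo]
              exact (mem_filter.mp hx).2
          _ = it - i1 - 1 := Nat.card_Ioo i1 it
      omega
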